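/- Under the push-sum setup (P column-stochastic primitive, y[t] = P^t 1 positive, Q[t] = diag(y[t+1])^{-1} P diag(y[t]), Φ(t,s) the product Q[t]⋯Q[s]), there exist constants C > 0 and λ ∈ (0,1) such that for all i,j ∈ [n] and all t ≥ 0: |Φ(t,0)_{ij} − (1/n) Σ_{k=1}^n Φ(t,0)_{kj}| ≤ C λ^t. -/

import Mathlib

open Matrix Finset

/-- `Phi Q s k` is the product `Q (s+k) * Q (s+k-1) * ⋯ * Q s`, i.e. `Φ(s+k, s)`. -/
def Phi {n : ℕ} (Q : ℕ → Matrix (Fin n) (Fin n) ℝ) (s : ℕ) : ℕ → Matrix (Fin n) (Fin n) ℝ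
  | 0 => Q s
  | k + 1 => Q (s + k + 1) * Phi Q s k

theorem stmt_5 {n : ℕ} (P : Matrix (Fin n) (Fin n) ℝ)
    (hnonneg : ∀ i j, 0 ≤ P i j)
    (hcol : ∀ j, ∑ i, P i j = 1)
    (hprim : ∃ k : ℕ, ∀ i j, 0 < (P ^ k) i j)
    (y : ℕ → Fin n → ℝ)
    (hy : ∀ t, y t = (P ^ t) *ᵥ (fun _ => (1 : ℝ)))
    (hypos : ∀ t i, 0 < y t i)
    (Q : ℕ → Matrix (Fin n) (Fin n) ℝ)
    (hQ : ∀ t, Q t = Matrix.diagonal (fun i => (y (t + 1) i)⁻¹) * P * Matrix.diagonal (y t)) :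
    ∃ C : ℝ, ∃ lam : ℝ, 0 < C ∧ 0 < lam ∧ lam < 1 ∧
      ∀ (t : ℕ) (i j : Fin n),
        |Phi Q 0 t i j - (1 / n) * ∑ k, Phi Q 0 t k j| ≤ C * lam ^ t := by
  classical
  rcases Nat.lt_or_ge n 2 with hn | hn
  · -- trivial cases n = 0, 1
    refine ⟨1, 1/2, one_pos, by norm_num, by norm_num, ?_⟩
    intro t i j
    interval_cases n
    · exact i.elim0
    · have hi : i = 0 := Subsingleton.elim _ _
      subst hi
      rw [Fin.sum_univ_one]
      norm_num
  -- main case n ≥ 2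
  haveI hnn : Nonempty (Fin n) := ⟨⟨0, by omega⟩⟩
  have hnR : (0:ℝ) < n := by exact_mod_cast (by omega : 0 < n)
  have hy0 : ∀ j, y 0 j = 1 := by
    intro j; rw [hy]; simp
  have hysum : ∀ t i, y t i = ∑ j, (P ^ t) i j := by
    intro t i; rw [hy]; simp [Matrix.mulVec, dotProduct]
  have hPn : ∀ t i j, 0 ≤ (P ^ t) i j := by
    intro t
    induction t with
    | zero => intro i j; rw [pow_zero, Matrix.one_apply]; positivity
    | succ t ih =>
      intro i j
      rw [pow_succ, Matrix.mul_apply]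
      exact Finset.sum_nonneg fun l _ => mul_nonneg (ih i l) (hnonneg l j)
  have hcolpow : ∀ t j, ∑ i, (P ^ t) i j = 1 := by
    intro t
    induction t with
    | zero => intro j; simp [Matrix.one_apply]
    | succ t ih =>
      intro j
      simp only [pow_succ, Matrix.mul_apply]
      rw [Finset.sum_comm]
      calc ∑ l, ∑ i, (P ^ t) i l * P l j
          = ∑ l, (∑ i, (P ^ t) i l) * P l j := by
            exact Finset.sum_congr rfl fun l _ => (Finset.sum_mul _ _ _).symm
        _ = ∑ l, P l j := Finset.sum_congr rfl fun l _ => by rw [ih, one_mul]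
        _ = 1 := hcol j
  have hysumn : ∀ t, ∑ i, y t i = (n : ℝ) := by
    intro t
    simp only [hysum]
    refine (Finset.sum_comm).trans ?_
    simp [hcolpow]
  have hyub : ∀ t i, y t i ≤ n := by
    intro t i
    calc y t i ≤ ∑ k, y t k :=
          Finset.single_le_sum (fun k _ => (hypos t k).le) (mem_univ i)
      _ = n := hysumn t
  obtain ⟨T, hk0⟩ := hprim
  have hT : 0 < T := by
    by_contra h
    have hT0 : T = 0 := by omega
    subst hT0
    have h2 := hk0 ⟨0, by omega⟩ ⟨1, by omega⟩
    rw [pow_zero, Matrix.one_apply_ne (Fin.ne_of_val_ne (by norm_num))] at h2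
    exact lt_irrefl 0 h2
  -- minimum entry of P^T
  set ε : ℝ := (univ : Finset (Fin n × Fin n)).inf' univ_nonempty
      (fun p => (P ^ T) p.1 p.2) with hεdef
  have hεpos : 0 < ε := by
    obtain ⟨p, -, hp⟩ := Finset.exists_mem_eq_inf'
      (univ_nonempty : (univ : Finset (Fin n × Fin n)).Nonempty)
      (fun p : Fin n × Fin n => (P ^ T) p.1 p.2)
    rw [hεdef, hp]; exact hk0 p.1 p.2
  have hεle : ∀ i l, ε ≤ (P ^ T) i l := fun i l =>
    Finset.inf'_le _ (mem_univ ((i, l) : Fin n × Fin n))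
  -- uniform lower bound on y
  have hρ0ne : ((Finset.range T) ×ˢ (univ : Finset (Fin n))).Nonempty :=
    ⟨(0, Classical.arbitrary _), by simp [Finset.mem_product, hT]⟩
  set ρ0 : ℝ := ((Finset.range T) ×ˢ (univ : Finset (Fin n))).inf' hρ0ne
      (fun p => y p.1 p.2) with hρ0def
  have hρ0pos : 0 < ρ0 := by
    obtain ⟨p, -, hp⟩ := Finset.exists_mem_eq_inf' hρ0ne (fun p : ℕ × Fin n => y p.1 p.2)
    rw [hρ0def, hp]; exact hypos _ _
  set ρ : ℝ := min (ε * n) ρ0 with hρdef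
  have hρpos : 0 < ρ := lt_min (by positivity) hρ0pos
  have hyT : ∀ t i, y (t + T) i = ∑ l, (P ^ T) i l * y t l := by
    intro t i
    have h : y (t + T) = (P ^ T) *ᵥ y t := by
      rw [hy (t + T), hy t, Matrix.mulVec_mulVec, ← pow_add, add_comm T t]
    rw [h]
    simp [Matrix.mulVec, dotProduct]
  have hρle : ∀ t i, ρ ≤ y t i := by
    intro t i
    rcases Nat.lt_or_ge t T with h | h
    · have hmem : ((t, i) : ℕ × Fin n) ∈ (Finset.range T) ×ˢ (univ : Finset (Fin n)) := by
        simp [Finset.mem_product, h]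
      exact le_trans (min_le_right _ _) (Finset.inf'_le _ hmem)
    · obtain ⟨s, rfl⟩ : ∃ s, t = s + T := ⟨t - T, by omega⟩
      refine le_trans (min_le_left _ _) ?_
      rw [hyT]
      calc ε * n = ε * ∑ l, y s l := by rw [hysumn]
        _ = ∑ l, ε * y s l := Finset.mul_sum _ _ _
        _ ≤ ∑ l, (P ^ T) i l * y s l :=
            Finset.sum_le_sum fun l _ =>
              mul_le_mul_of_nonneg_right (hεle i l) (hypos s l).le
  -- the normalized matrices
  set F : ℕ → Fin n → Fin n → ℝ := fun u i j => (P ^ u) i j / y u i with hFdef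
  have hPhiF : ∀ t i j, Phi Q 0 t i j = F (t + 1) i j := by
    intro t
    induction t with
    | zero =>
      intro i j
      show Q 0 i j = _
      rw [hQ, Matrix.mul_diagonal, Matrix.diagonal_mul, hy0]
      simp only [hFdef, pow_one]
      rw [div_eq_inv_mul, mul_one, Nat.zero_add, pow_one]
    | succ t ih =>
      intro i j
      show (Q (0 + t + 1) * Phi Q 0 t) i j = F (t + 1 + 1) i j
      rw [Matrix.mul_apply]
      simp only [Nat.zero_add]
      have hterm : ∀ l, Q (t + 1) i l * Phi Q 0 t l j
          = (y (t + 1 + 1) i)⁻¹ * (P i l * (P ^ (t + 1)) l j) := by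
        intro l
        rw [ih, hQ, Matrix.mul_diagonal, Matrix.diagonal_mul]
        simp only [hFdef]
        have hb0 : y (t + 1) l ≠ 0 := (hypos (t + 1) l).ne'
        have ha0 : y (t + 1 + 1) i ≠ 0 := (hypos (t + 1 + 1) i).ne'
        generalize ha : y (t + 1 + 1) i = a at ha0 ⊢
        generalize hb : y (t + 1) l = b at hb0 ⊢
        field_simp
      rw [Finset.sum_congr rfl fun l _ => hterm l, ← Finset.mul_sum]
      simp only [hFdef]
      rw [show (P : Matrix (Fin n) (Fin n) ℝ) ^ (t + 1 + 1) = P * P ^ (t + 1) from pow_succ' P (t + 1),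
        Matrix.mul_apply, div_eq_inv_mul]
  have hFnonneg : ∀ u (i j : Fin n), 0 ≤ F u i j := fun u i j =>
    div_nonneg (hPn u i j) (hypos u i).le
  have hFrow : ∀ u (i : Fin n), ∑ j, F u i j = 1 := by
    intro u i
    simp only [hFdef]
    rw [← Finset.sum_div, ← hysum, div_self (hypos u i).ne']
  have hFle1 : ∀ u (i j : Fin n), F u i j ≤ 1 := by
    intro u i j
    calc F u i j ≤ ∑ j', F u i j' :=
          Finset.single_le_sum (fun k _ => hFnonneg u i k) (mem_univ j)
      _ = 1 := hFrow u i
  -- max and min over rows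
  set MM : ℕ → Fin n → ℝ := fun u j => univ.sup' univ_nonempty (fun i => F u i j) with hMdef
  set mm : ℕ → Fin n → ℝ := fun u j => univ.inf' univ_nonempty (fun i => F u i j) with hmdef
  have hmle : ∀ u (i j : Fin n), mm u j ≤ F u i j := by
    intro u i j
    simp only [hmdef]
    exact Finset.inf'_le (fun i => F u i j) (mem_univ i)
  have hleM : ∀ u (i j : Fin n), F u i j ≤ MM u j := by
    intro u i j
    simp only [hMdef]
    exact Finset.le_sup' (fun i => F u i j) (mem_univ i)
  have hm0 : ∀ u (j : Fin n), 0 ≤ mm u j := by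
    intro u j
    simp only [hmdef]
    exact Finset.le_inf' _ _ fun i _ => hFnonneg u i j
  have hM1 : ∀ u (j : Fin n), MM u j ≤ 1 := by
    intro u j
    simp only [hMdef]
    exact Finset.sup'_le _ _ fun i _ => hFle1 u i j
  have hgapnn : ∀ u (j : Fin n), 0 ≤ MM u j - mm u j := by
    intro u j
    have i0 : Fin n := Classical.arbitrary _
    linarith [le_trans (hmle u i0 j) (hleM u i0 j)]
  -- contraction constant
  set δ : ℝ := min (ε * ρ / n) (1/3) with hδdef
  have hδpos : 0 < δ := lt_min (by positivity) (by norm_num)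
  have hδ3 : δ ≤ 1/3 := min_le_right _ _
  set r : ℝ := 1 - 2 * δ with hrdef
  have hr0 : 0 < r := by rw [hrdef]; linarith
  have hr1 : r < 1 := by rw [hrdef]; linarith
  -- window contraction
  have hwin : ∀ u (j : Fin n), MM (u + T) j - mm (u + T) j ≤ r * (MM u j - mm u j) := by
    intro u j
    set A : Fin n → Fin n → ℝ := fun i l => (P ^ T) i l * y u l / y (u + T) i with hAdef
    have hAδ : ∀ i l, δ ≤ A i l := by
      intro i l
      refine le_trans (min_le_left _ _) ?_
      simp only [hAdef]
      have h1 : ε * ρ ≤ (P ^ T) i l * y u l :=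
        mul_le_mul (hεle i l) (hρle u l) hρpos.le (hk0 i l).le
      exact div_le_div₀ (mul_nonneg (hPn T i l) (hypos u l).le) h1 (hypos (u + T) i) (hyub (u + T) i)
    have hAnn : ∀ i l, 0 ≤ A i l := fun i l => le_trans hδpos.le (hAδ i l)
    have hArow : ∀ i, ∑ l, A i l = 1 := by
      intro i
      simp only [hAdef]
      rw [← Finset.sum_div, ← hyT, div_self (hypos _ _).ne']
    have hrec : ∀ i, F (u + T) i j = ∑ l, A i l * F u l j := by
      intro i
      have hterm : ∀ l, A i l * F u l j = (P ^ T) i l * (P ^ u) l j / y (u + T) i := by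
        intro l
        simp only [hAdef, hFdef]
        have hb0 : y u l ≠ 0 := (hypos u l).ne'
        have ha0 : y (u + T) i ≠ 0 := (hypos (u + T) i).ne'
        generalize hb : y u l = b at hb0 ⊢
        generalize ha : y (u + T) i = a at ha0 ⊢
        field_simp
      rw [Finset.sum_congr rfl fun l _ => hterm l, ← Finset.sum_div]
      simp only [hFdef]
      congr 1
      rw [add_comm u T, pow_add, Matrix.mul_apply]
    have hub : ∀ i, F (u + T) i j ≤ MM u j - δ * (MM u j - mm u j) := by
      intro i
      obtain ⟨l0, -, hl0⟩ := Finset.exists_mem_eq_inf'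
        (univ_nonempty : (univ : Finset (Fin n)).Nonempty) (fun l => F u l j)
      have hsum : ∑ l ∈ univ.erase l0, A i l = 1 - A i l0 := by
        have h := Finset.sum_erase_add univ (A i) (mem_univ l0)
        linarith [hArow i]
      have hFl0 : F u l0 j = mm u j := by simp only [hmdef]; exact hl0.symm
      calc F (u + T) i j = ∑ l, A i l * F u l j := hrec i
        _ = (∑ l ∈ univ.erase l0, A i l * F u l j) + A i l0 * F u l0 j :=
            (Finset.sum_erase_add _ _ (mem_univ l0)).symm
        _ ≤ (∑ l ∈ univ.erase l0, A i l * MM u j) + A i l0 * mm u j := by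
            refine add_le_add (Finset.sum_le_sum fun l _ =>
              mul_le_mul_of_nonneg_left (hleM u l j) (hAnn i l)) ?_
            rw [hFl0]
        _ = (1 - A i l0) * MM u j + A i l0 * mm u j := by
            rw [← Finset.sum_mul, hsum]
        _ = MM u j - A i l0 * (MM u j - mm u j) := by ring
        _ ≤ MM u j - δ * (MM u j - mm u j) := by
            linarith [mul_le_mul_of_nonneg_right (hAδ i l0) (hgapnn u j)]
    have hlb : ∀ i, mm u j + δ * (MM u j - mm u j) ≤ F (u + T) i j := by
      intro i
      obtain ⟨l1, -, hl1⟩ := Finset.exists_mem_eq_sup'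
        (univ_nonempty : (univ : Finset (Fin n)).Nonempty) (fun l => F u l j)
      have hsum : ∑ l ∈ univ.erase l1, A i l = 1 - A i l1 := by
        have h := Finset.sum_erase_add univ (A i) (mem_univ l1)
        linarith [hArow i]
      have hFl1 : F u l1 j = MM u j := by simp only [hMdef]; exact hl1.symm
      calc mm u j + δ * (MM u j - mm u j)
          ≤ mm u j + A i l1 * (MM u j - mm u j) := by
            linarith [mul_le_mul_of_nonneg_right (hAδ i l1) (hgapnn u j)]
        _ = (1 - A i l1) * mm u j + A i l1 * MM u j := by ring
        _ = (∑ l ∈ univ.erase l1, A i l * mm u j) + A i l1 * F u l1 j := by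
            rw [← Finset.sum_mul, hsum, hFl1]
        _ ≤ (∑ l ∈ univ.erase l1, A i l * F u l j) + A i l1 * F u l1 j := by
            refine add_le_add (Finset.sum_le_sum fun l _ =>
              mul_le_mul_of_nonneg_left (hmle u l j) (hAnn i l)) le_rfl
        _ = ∑ l, A i l * F u l j := Finset.sum_erase_add _ _ (mem_univ l1)
        _ = F (u + T) i j := (hrec i).symm
    have h1 : MM (u + T) j ≤ MM u j - δ * (MM u j - mm u j) := by
      simp only [hMdef]
      exact Finset.sup'_le _ _ fun i _ => hub i
    have h2 : mm u j + δ * (MM u j - mm u j) ≤ mm (u + T) j := by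
      simp only [hmdef]
      exact Finset.le_inf' _ _ fun i _ => hlb i
    rw [hrdef]; linarith
  -- iterate contraction
  have hiter : ∀ q s (j : Fin n),
      MM (s + q * T) j - mm (s + q * T) j ≤ r ^ q * (MM s j - mm s j) := by
    intro q
    induction q with
    | zero => intro s j; simp
    | succ q ih =>
      intro s j
      have he : s + (q + 1) * T = (s + q * T) + T := by ring
      rw [he]
      calc MM ((s + q * T) + T) j - mm ((s + q * T) + T) j
          ≤ r * (MM (s + q * T) j - mm (s + q * T) j) := hwin _ j
        _ ≤ r * (r ^ q * (MM s j - mm s j)) :=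
            mul_le_mul_of_nonneg_left (ih s j) hr0.le
        _ = r ^ (q + 1) * (MM s j - mm s j) := by ring
  -- assemble
  have hTpos : (0:ℝ) < T := by exact_mod_cast hT
  refine ⟨r⁻¹, r ^ ((T:ℝ)⁻¹), inv_pos.mpr hr0, Real.rpow_pos_of_pos hr0 _,
    Real.rpow_lt_one hr0.le hr1 (by positivity), ?_⟩
  intro t i j
  set q := (t + 1) / T with hqdef
  set s := (t + 1) % T with hsdef
  have hu : s + q * T = t + 1 := Nat.mod_add_div' (t + 1) T
  have hsp : MM (t + 1) j - mm (t + 1) j ≤ r ^ q := by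
    calc MM (t + 1) j - mm (t + 1) j = MM (s + q * T) j - mm (s + q * T) j := by rw [hu]
      _ ≤ r ^ q * (MM s j - mm s j) := hiter q s j
      _ ≤ r ^ q * 1 := by
          refine mul_le_mul_of_nonneg_left ?_ (pow_nonneg hr0.le q)
          linarith [hM1 s j, hm0 s j]
      _ = r ^ q := mul_one _
  have hsumF : ∑ k, Phi Q 0 t k j = ∑ k, F (t + 1) k j :=
    Finset.sum_congr rfl fun k _ => hPhiF t k j
  have havgM : (1 / (n:ℝ)) * ∑ k, Phi Q 0 t k j ≤ MM (t + 1) j := by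
    rw [hsumF]
    have h : ∑ k, F (t + 1) k j ≤ n * MM (t + 1) j := by
      calc ∑ k, F (t + 1) k j ≤ ∑ _k : Fin n, MM (t + 1) j :=
            Finset.sum_le_sum fun k _ => hleM _ k j
        _ = n * MM (t + 1) j := by simp [mul_comm]
    calc (1 / (n:ℝ)) * ∑ k, F (t + 1) k j ≤ (1 / (n:ℝ)) * (n * MM (t + 1) j) :=
          mul_le_mul_of_nonneg_left h (by positivity)
      _ = MM (t + 1) j := by field_simp
  have havgm : mm (t + 1) j ≤ (1 / (n:ℝ)) * ∑ k, Phi Q 0 t k j := by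
    rw [hsumF]
    have h : n * mm (t + 1) j ≤ ∑ k, F (t + 1) k j := by
      calc (n : ℝ) * mm (t + 1) j = ∑ _k : Fin n, mm (t + 1) j := by simp [mul_comm]
        _ ≤ ∑ k, F (t + 1) k j := Finset.sum_le_sum fun k _ => hmle _ k j
    calc mm (t + 1) j = (1 / (n:ℝ)) * (n * mm (t + 1) j) := by field_simp
      _ ≤ (1 / (n:ℝ)) * ∑ k, F (t + 1) k j :=
          mul_le_mul_of_nonneg_left h (by positivity)
  have hbound : |Phi Q 0 t i j - (1 / n) * ∑ k, Phi Q 0 t k j|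
      ≤ MM (t + 1) j - mm (t + 1) j := by
    rw [abs_sub_le_iff]
    constructor
    · rw [hPhiF t i j]; linarith [hleM (t + 1) i j]
    · rw [hPhiF t i j]; linarith [hmle (t + 1) i j]
  have hfin : r ^ q ≤ r⁻¹ * (r ^ ((T:ℝ)⁻¹)) ^ t := by
    have e1 : (r ^ ((T:ℝ)⁻¹)) ^ t = r ^ ((T:ℝ)⁻¹ * t) := by
      rw [← Real.rpow_natCast (r ^ ((T:ℝ)⁻¹)) t, ← Real.rpow_mul hr0.le]
    have e2 : r⁻¹ * r ^ ((T:ℝ)⁻¹ * t) = r ^ (-1 + (T:ℝ)⁻¹ * t) := by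
      rw [Real.rpow_add hr0, Real.rpow_neg_one]
    rw [e1, e2, ← Real.rpow_natCast r q]
    apply Real.rpow_le_rpow_of_exponent_ge hr0 hr1.le
    have hst : (s:ℝ) + (q:ℝ) * T = (t:ℝ) + 1 := by exact_mod_cast hu
    have hsT1 : (s:ℝ) + 1 ≤ (T:ℝ) := by
      exact_mod_cast Nat.succ_le_of_lt (Nat.mod_lt _ hT)
    have hkey : (t:ℝ) ≤ ((q:ℝ) + 1) * T := by nlinarith
    have h3 : (T:ℝ)⁻¹ * t ≤ (q:ℝ) + 1 := by
      rw [inv_mul_le_iff₀ hTpos]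
      linarith
    linarith
  calc |Phi Q 0 t i j - (1 / n) * ∑ k, Phi Q 0 t k j|
      ≤ MM (t + 1) j - mm (t + 1) j := hbound
    _ ≤ r ^ q := hsp
    _ ≤ r⁻¹ * (r ^ ((T:ℝ)⁻¹)) ^ t := hfin
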